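/- Let θ > 0, p ∈ ℝ and 0 < η < η₂ ≤ ∞. Then lim_{t→∞} (1+η^{2θ})^{t−1} · t · ∫_{η}^{η₂} (1+r^{2θ})^{−t} r^{p} dr = η^{p+1−2θ}/(2θ). -/

import Mathlib

open MeasureTheory Filter

set_option maxHeartbeats 1000000

open Real Set in
private lemma stmt3_cov (θ p η t : ℝ) (hθ : 0 < θ) (hη : 0 < η) (ht : 0 < t) :
    (1 + η ^ (2 * θ)) ^ (t - 1) * t * ∫ r in Ioi η, (1 + r ^ (2 * θ)) ^ (-t) * r ^ p
      = ∫ x in Ioi (0:ℝ), Real.exp (-x) * Real.exp (x / t) *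
          (((1 + η ^ (2 * θ)) * Real.exp (x / t) - 1) ^ ((p + 1) / (2 * θ) - 1) / (2 * θ)) := by
  set A : ℝ := 1 + η ^ (2 * θ) with hAdef
  have hA1 : 1 < A := by
    have := Real.rpow_pos_of_pos hη (2 * θ); simp [hAdef]; linarith
  have hA0 : 0 < A := by linarith
  set q : ℝ := (p + 1) / (2 * θ) - 1 with hqdef
  set f : ℝ → ℝ := fun r => t * (Real.log (1 + r ^ (2 * θ)) - Real.log A) with hfdef
  set f' : ℝ → ℝ := fun r => t * (2 * θ * r ^ (2 * θ - 1) / (1 + r ^ (2 * θ))) with hf'def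
  have hU : ∀ r : ℝ, 0 < r → 0 < 1 + r ^ (2 * θ) := fun r hr => by positivity
  have hmono : StrictMonoOn f (Ici η) := by
    intro a ha b hb hab
    have ha0 : 0 < a := lt_of_lt_of_le hη ha
    have h1 : a ^ (2 * θ) < b ^ (2 * θ) := Real.rpow_lt_rpow ha0.le hab (by positivity)
    have h2 : Real.log (1 + a ^ (2 * θ)) < Real.log (1 + b ^ (2 * θ)) :=
      Real.log_lt_log (hU a ha0) (by linarith)
    simp only [hfdef]
    have := sub_lt_sub_right h2 (Real.log A)
    exact mul_lt_mul_of_pos_left this ht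
  have hinj : InjOn f (Ioi η) := (hmono.mono Ioi_subset_Ici_self).injOn
  have hderiv : ∀ r ∈ Ioi η, HasDerivWithinAt f (f' r) (Ioi η) r := by
    intro r hr
    have hr0 : 0 < r := hη.trans hr
    have h1 : HasDerivAt (fun y : ℝ => y ^ (2 * θ)) (2 * θ * r ^ (2 * θ - 1)) r :=
      Real.hasDerivAt_rpow_const (Or.inl hr0.ne')
    have h2 : HasDerivAt (fun y : ℝ => 1 + y ^ (2 * θ)) (2 * θ * r ^ (2 * θ - 1)) r :=
      h1.const_add 1
    have h3 := h2.log (hU r hr0).ne'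
    exact (((h3.sub_const (Real.log A))).const_mul t).hasDerivWithinAt
  have hcontAt : ∀ r : ℝ, 0 < r → ContinuousAt f r := by
    intro r hr0
    have c1 : ContinuousAt (fun y : ℝ => y ^ (2 * θ)) r :=
      Real.continuousAt_rpow_const r (2 * θ) (Or.inl hr0.ne')
    exact (((continuousAt_const.add c1).log (hU r hr0).ne').sub continuousAt_const).const_mul t
  have hcont : ContinuousOn f (Ioi η) := fun r hr =>
    (hcontAt r (hη.trans hr)).continuousWithinAt
  have hfη : f η = 0 := by simp [hfdef, hAdef]
  have himg : f '' Ioi η = Ioi 0 := by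
    apply Subset.antisymm
    · rintro _ ⟨r, hr, rfl⟩
      have := hmono (self_mem_Ici) (mem_Ici.2 (le_of_lt hr)) hr
      rw [hfη] at this
      exact this
    · have ht₁ : Tendsto f (nhdsWithin η (Ioi η)) (nhds 0) := by
        have := (hcontAt η hη).continuousWithinAt (s := Ioi η)
        rw [ContinuousWithinAt, hfη] at this
        exact this
      have ht₂ : Tendsto f atTop atTop := by
        have hrp : Tendsto (fun r : ℝ => r ^ (2 * θ)) atTop atTop :=
          tendsto_rpow_atTop (by positivity)
        have hlog : Tendsto (fun r : ℝ => Real.log (1 + r ^ (2 * θ))) atTop atTop :=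
          Real.tendsto_log_atTop.comp (tendsto_atTop_add_const_left _ 1 hrp)
        have := (tendsto_atTop_add_const_right _ (-(Real.log A)) hlog).const_mul_atTop ht
        rw [hfdef]; simpa only [sub_eq_add_neg] using this
      have := (isPreconnected_Ioi (a := η)).intermediate_value_Ioi
        (l₁ := nhdsWithin η (Ioi η)) (l₂ := atTop)
        inf_le_right (le_principal_iff.mpr (Ioi_mem_atTop η)) hcont ht₁ ht₂
      exact this
  rw [← himg, integral_image_eq_integral_abs_deriv_smul measurableSet_Ioi hderiv hinj,
    ← integral_const_mul]
  apply setIntegral_congr_fun measurableSet_Ioi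
  intro r hr
  have hr0 : 0 < r := hη.trans hr
  have hu0 : 0 < r ^ (2 * θ) := Real.rpow_pos_of_pos hr0 _
  have hUpos : 0 < 1 + r ^ (2 * θ) := hU r hr0
  have h1 : f r / t = Real.log ((1 + r ^ (2 * θ)) / A) := by
    rw [Real.log_div hUpos.ne' hA0.ne']
    simp only [hfdef]
    field_simp
  have h2 : Real.exp (f r / t) = (1 + r ^ (2 * θ)) / A := by
    rw [h1, Real.exp_log (by positivity)]
  have h3 : Real.exp (-(f r)) = ((1 + r ^ (2 * θ)) / A) ^ (-t) := by
    rw [Real.rpow_def_of_pos (by positivity), Real.log_div hUpos.ne' hA0.ne']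
    congr 1
    simp only [hfdef]; ring
  have h4 : A * Real.exp (f r / t) - 1 = r ^ (2 * θ) := by
    rw [h2]; field_simp; ring
  have h5 : (r ^ (2 * θ)) ^ q = r ^ (p + 1 - 2 * θ) := by
    rw [← Real.rpow_mul hr0.le]
    congr 1
    rw [hqdef]; field_simp
  have h6 : |f' r| = t * (2 * θ * r ^ (2 * θ - 1) / (1 + r ^ (2 * θ))) := by
    have : 0 < f' r := by
      simp only [hf'def]
      positivity
    rw [abs_of_pos this]
  have hd : ((1 + r ^ (2 * θ)) / A) ^ (-t) = (1 + r ^ (2 * θ)) ^ (-t) / A ^ (-t) :=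
    Real.div_rpow hUpos.le hA0.le _
  have hAt : A ^ (t - 1) * A = A ^ t := by
    rw [← Real.rpow_add_one hA0.ne']
    norm_num
  have hAneg : A ^ (-t) = (A ^ t)⁻¹ := Real.rpow_neg hA0.le t
  have hrp : r ^ (2 * θ - 1) * r ^ (p + 1 - 2 * θ) = r ^ p := by
    rw [← Real.rpow_add hr0]
    congr 1
    ring
  simp only [smul_eq_mul]
  rw [h6, h3, h4, h5, h2, hd]
  have hAt0 : (0:ℝ) < A ^ (t - 1) := Real.rpow_pos_of_pos hA0 _
  have hAtt : (0:ℝ) < A ^ t := Real.rpow_pos_of_pos hA0 _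
  have hAn : (0:ℝ) < A ^ (-t) := Real.rpow_pos_of_pos hA0 _
  have hUt : (0:ℝ) < (1 + r ^ (2 * θ)) ^ (-t) := Real.rpow_pos_of_pos hUpos _
  rw [← hrp]
  have hAA : A ^ (-t) * (A ^ (t-1) * A) = 1 := by
    rw [hAt, ← Real.rpow_add hA0]
    norm_num
  field_simp
  linear_combination hAA

open Real Set in
private lemma stmt3_key (θ p η : ℝ) (hθ : 0 < θ) (hη : 0 < η) :
    Tendsto (fun t : ℝ => (1 + η ^ (2 * θ)) ^ (t - 1) * t *
        ∫ r in Ioi η, (1 + r ^ (2 * θ)) ^ (-t) * r ^ p)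
      atTop (nhds (η ^ (p + 1 - 2 * θ) / (2 * θ))) := by
  set A : ℝ := 1 + η ^ (2 * θ) with hAdef
  have hη2θ : 0 < η ^ (2 * θ) := Real.rpow_pos_of_pos hη _
  have hA1 : 1 < A := by simp only [hAdef]; linarith
  have hA0 : 0 < A := by linarith
  set q : ℝ := (p + 1) / (2 * θ) - 1 with hqdef
  set T : ℝ := 2 * (1 + |q|) with hTdef
  have hT2 : 2 ≤ T := by
    have : 0 ≤ |q| := abs_nonneg q
    simp only [hTdef]; linarith
  have hT0 : 0 < T := by linarith
  set G : ℝ → ℝ → ℝ := fun t x => Real.exp (-x) * Real.exp (x / t) *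
      ((A * Real.exp (x / t) - 1) ^ q / (2 * θ)) with hGdef
  set M : ℝ := A ^ |q| + (η ^ (2 * θ)) ^ (-|q|) with hMdef
  have hM0 : 0 < M := by
    have h1 : 0 < A ^ |q| := Real.rpow_pos_of_pos hA0 _
    have h2 : 0 < (η ^ (2 * θ)) ^ (-|q|) := Real.rpow_pos_of_pos hη2θ _
    simp only [hMdef]; linarith
  have h5 : (η ^ (2 * θ)) ^ q = η ^ (p + 1 - 2 * θ) := by
    rw [← Real.rpow_mul hη.le]
    congr 1
    rw [hqdef]; field_simp
  -- the limit function
  have hlimint : ∫ x in Ioi (0:ℝ), Real.exp (-x) * (η ^ (p + 1 - 2 * θ) / (2 * θ))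
      = η ^ (p + 1 - 2 * θ) / (2 * θ) := by
    rw [integral_mul_const, integral_exp_neg_Ioi_zero, one_mul]
  have hDCT : Tendsto (fun t : ℝ => ∫ x in Ioi (0:ℝ), G t x) atTop
      (nhds (η ^ (p + 1 - 2 * θ) / (2 * θ))) := by
    rw [← hlimint]
    apply tendsto_integral_filter_of_dominated_convergence
      (bound := fun x => (M / (2 * θ)) * Real.exp ((-(1/2) * x)))
    · -- measurability
      filter_upwards [eventually_gt_atTop (0:ℝ)] with t ht0
      apply ContinuousOn.aestronglyMeasurable _ measurableSet_Ioi
      intro x hx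
      have hx0 : (0:ℝ) < x := hx
      have hbase : (0:ℝ) < A * Real.exp (x / t) - 1 := by
        have : (1:ℝ) ≤ Real.exp (x / t) := Real.one_le_exp (by positivity)
        nlinarith
      have c1 : ContinuousAt (fun y : ℝ => A * Real.exp (y / t) - 1) x := by
        fun_prop
      have c2 : ContinuousAt (fun y : ℝ => (A * Real.exp (y / t) - 1) ^ q) x :=
        c1.rpow_const (Or.inl hbase.ne')
      apply ContinuousAt.continuousWithinAt
      exact ((Real.continuous_exp.comp continuous_neg).continuousAt.mul
        (Real.continuous_exp.continuousAt.comp (by fun_prop))).mul (c2.div_const _)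
    · -- bound
      filter_upwards [eventually_ge_atTop T] with t htT
      have ht0 : 0 < t := lt_of_lt_of_le hT0 htT
      rw [ae_restrict_iff' measurableSet_Ioi]
      apply ae_of_all
      intro x hx
      have hx0 : (0:ℝ) < x := hx
      have hxt : x / t ≤ x / T := div_le_div_of_nonneg_left hx0.le hT0 htT
      have hxt0 : 0 ≤ x / t := by positivity
      have hexp1 : (1:ℝ) ≤ Real.exp (x / t) := Real.one_le_exp hxt0
      have hexple : Real.exp (x / t) ≤ Real.exp (x / T) := Real.exp_le_exp.2 hxt
      set u : ℝ := A * Real.exp (x / t) - 1 with hudef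
      have hu_lb : η ^ (2 * θ) ≤ u := by
        have := mul_le_mul_of_nonneg_left hexp1 hA0.le
        simp only [hudef, hAdef]; nlinarith
      have hu0 : 0 < u := lt_of_lt_of_le hη2θ hu_lb
      have hu_ub : u ≤ A * Real.exp (x / T) := by
        have := mul_le_mul_of_nonneg_left hexple hA0.le
        simp only [hudef]; linarith
      have hq : u ^ q ≤ M * Real.exp (|q| * (x / T)) := by
        have hexpT1 : (1:ℝ) ≤ Real.exp (|q| * (x / T)) :=
          Real.one_le_exp (by positivity)
        rcases le_or_gt 0 q with hq0 | hq0
        · have h1 : u ^ q ≤ (A * Real.exp (x / T)) ^ q :=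
            Real.rpow_le_rpow hu0.le hu_ub hq0
          have h2 : (A * Real.exp (x / T)) ^ q = A ^ q * Real.exp ((x / T) * q) := by
            rw [Real.mul_rpow hA0.le (Real.exp_pos _).le, ← Real.exp_mul]
          have h3 : A ^ q * Real.exp ((x / T) * q) ≤ M * Real.exp (|q| * (x / T)) := by
            rw [abs_of_nonneg hq0] at hMdef ⊢
            have h4 : (x / T) * q = q * (x / T) := by ring
            rw [h4]
            apply mul_le_mul_of_nonneg_right _ (Real.exp_pos _).le
            rw [hMdef]
            have : 0 < (η ^ (2 * θ)) ^ (-q) := Real.rpow_pos_of_pos hη2θ _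
            linarith
          calc u ^ q ≤ (A * Real.exp (x / T)) ^ q := h1
            _ = A ^ q * Real.exp ((x / T) * q) := h2
            _ ≤ M * Real.exp (|q| * (x / T)) := h3
        · have h1 : u ^ q ≤ (η ^ (2 * θ)) ^ q :=
            Real.rpow_le_rpow_of_nonpos hη2θ hu_lb hq0.le
          have h2 : (η ^ (2 * θ)) ^ q = (η ^ (2 * θ)) ^ (-|q|) := by
            rw [abs_of_neg hq0, neg_neg]
          have h3 : (η ^ (2 * θ)) ^ (-|q|) ≤ M := by
            have : 0 < A ^ |q| := Real.rpow_pos_of_pos hA0 _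
            simp only [hMdef]; linarith
          calc u ^ q ≤ (η ^ (2 * θ)) ^ (-|q|) := h2 ▸ h1
            _ ≤ M := h3
            _ ≤ M * Real.exp (|q| * (x / T)) := le_mul_of_one_le_right hM0.le hexpT1
      have hGnn : 0 ≤ G t x := by
        have h1 : 0 ≤ u ^ q := (Real.rpow_pos_of_pos hu0 q).le
        simp only [hGdef, ← hudef]
        positivity
      rw [Real.norm_eq_abs, abs_of_nonneg hGnn]
      have hexpeq : Real.exp (-x) * Real.exp (x / T) * Real.exp (|q| * (x / T))
          = Real.exp ((-(1/2) * x)) := by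
        rw [← Real.exp_add, ← Real.exp_add]
        congr 1
        have hq1 : (0:ℝ) < 1 + |q| := by positivity
        field_simp [hTdef]
        ring
      calc G t x = Real.exp (-x) * Real.exp (x / t) * (u ^ q / (2 * θ)) := by
            simp only [hGdef, ← hudef]
        _ ≤ Real.exp (-x) * Real.exp (x / T) * ((M * Real.exp (|q| * (x / T))) / (2 * θ)) := by
            gcongr
        _ = (M / (2 * θ)) * (Real.exp (-x) * Real.exp (x / T) * Real.exp (|q| * (x / T))) := by
            ring
        _ = (M / (2 * θ)) * Real.exp ((-(1/2) * x)) := by rw [hexpeq]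
    · -- bound integrable
      exact (exp_neg_integrableOn_Ioi 0 (by norm_num : (0:ℝ) < 1/2)).const_mul _
    · -- pointwise limit
      apply ae_of_all
      intro x
      have h0 : Tendsto (fun t : ℝ => x / t) atTop (nhds 0) :=
        tendsto_const_nhds.div_atTop tendsto_id
      have hexp : Tendsto (fun t : ℝ => Real.exp (x / t)) atTop (nhds 1) := by
        have := (Real.continuous_exp.tendsto 0).comp h0
        simpa [Function.comp_def] using this
      have hbase : Tendsto (fun t : ℝ => A * Real.exp (x / t) - 1) atTop
          (nhds (η ^ (2 * θ))) := by
        have := (hexp.const_mul A).sub_const 1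
        have heq : A * 1 - 1 = η ^ (2 * θ) := by simp [hAdef]
        rwa [heq] at this
      have hrpow : Tendsto (fun t : ℝ => (A * Real.exp (x / t) - 1) ^ q) atTop
          (nhds ((η ^ (2 * θ)) ^ q)) :=
        ((Real.continuousAt_rpow_const _ q (Or.inl hη2θ.ne')).tendsto).comp hbase
      have hmain : Tendsto (fun t : ℝ => Real.exp (-x) * Real.exp (x / t) *
          ((A * Real.exp (x / t) - 1) ^ q / (2 * θ))) atTop
          (nhds (Real.exp (-x) * 1 * ((η ^ (2 * θ)) ^ q / (2 * θ)))) :=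
        (tendsto_const_nhds.mul hexp).mul (hrpow.div_const (2 * θ))
      have heq : Real.exp (-x) * 1 * ((η ^ (2 * θ)) ^ q / (2 * θ))
          = Real.exp (-x) * (η ^ (p + 1 - 2 * θ) / (2 * θ)) := by rw [h5]; ring
      rw [heq] at hmain
      simp only [hGdef]
      exact hmain
  apply hDCT.congr'
  filter_upwards [eventually_gt_atTop (0:ℝ)] with t ht0
  exact (stmt3_cov θ p η t hθ hη ht0).symm

open Real Set in
private lemma stmt3_integrable (θ p η t : ℝ) (hθ : 0 < θ) (hη : 0 < η) (ht0 : 0 < t)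
    (ht : p + 1 < 2 * θ * t) :
    IntegrableOn (fun r : ℝ => (1 + r ^ (2 * θ)) ^ (-t) * r ^ p) (Ioi η) := by
  have hmeas : AEStronglyMeasurable (fun r : ℝ => (1 + r ^ (2 * θ)) ^ (-t) * r ^ p)
      (volume.restrict (Ioi η)) := by
    apply ContinuousOn.aestronglyMeasurable _ measurableSet_Ioi
    intro r hr
    have hr0 : 0 < r := hη.trans hr
    have hU : 0 < 1 + r ^ (2 * θ) := by positivity
    have c1 : ContinuousAt (fun y : ℝ => y ^ (2 * θ)) r :=
      Real.continuousAt_rpow_const r _ (Or.inl hr0.ne')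
    have c2 : ContinuousAt (fun y : ℝ => (1 + y ^ (2 * θ)) ^ (-t)) r :=
      (continuousAt_const.add c1).rpow_const (Or.inl hU.ne')
    have c3 : ContinuousAt (fun y : ℝ => y ^ p) r :=
      Real.continuousAt_rpow_const r _ (Or.inl hr0.ne')
    exact (c2.mul c3).continuousWithinAt
  apply Integrable.mono' (g := fun r : ℝ => r ^ (p - 2 * θ * t))
    (integrableOn_Ioi_rpow_of_lt (by linarith) hη) hmeas
  rw [ae_restrict_iff' measurableSet_Ioi]
  apply ae_of_all
  intro r hr
  have hr0 : 0 < r := hη.trans hr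
  have hu0 : 0 < r ^ (2 * θ) := Real.rpow_pos_of_pos hr0 _
  have hU : 0 < 1 + r ^ (2 * θ) := by positivity
  have h1 : (1 + r ^ (2 * θ)) ^ (-t) ≤ (r ^ (2 * θ)) ^ (-t) :=
    Real.rpow_le_rpow_of_nonpos hu0 (by linarith) (by linarith)
  have hnn : 0 ≤ (1 + r ^ (2 * θ)) ^ (-t) * r ^ p :=
    mul_nonneg (Real.rpow_nonneg hU.le _) (Real.rpow_nonneg hr0.le _)
  rw [Real.norm_eq_abs, abs_of_nonneg hnn]
  calc (1 + r ^ (2 * θ)) ^ (-t) * r ^ p ≤ (r ^ (2 * θ)) ^ (-t) * r ^ p :=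
        mul_le_mul_of_nonneg_right h1 (Real.rpow_nonneg hr0.le _)
    _ = r ^ (p - 2 * θ * t) := by
        rw [← Real.rpow_mul hr0.le, ← Real.rpow_add hr0]
        congr 1
        ring

open Real Set in
private lemma stmt3_tail (θ p η b : ℝ) (hθ : 0 < θ) (hη : 0 < η) (hb : η < b) :
    Tendsto (fun t : ℝ => (1 + η ^ (2 * θ)) ^ (t - 1) * t *
        ∫ r in Ioi b, (1 + r ^ (2 * θ)) ^ (-t) * r ^ p) atTop (nhds 0) := by
  have hb0 : 0 < b := hη.trans hb
  have hkey := stmt3_key θ p b hθ hb0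
  set A : ℝ := 1 + η ^ (2 * θ) with hAdef
  set B : ℝ := 1 + b ^ (2 * θ) with hBdef
  have hA0 : 0 < A := by have := Real.rpow_pos_of_pos hη (2 * θ); simp only [hAdef]; linarith
  have hB0 : 0 < B := by have := Real.rpow_pos_of_pos hb0 (2 * θ); simp only [hBdef]; linarith
  have hAB : A < B := by
    have := Real.rpow_lt_rpow hη.le hb (by positivity : (0:ℝ) < 2 * θ)
    simp only [hAdef, hBdef]; linarith
  have h01 : A / B < 1 := (div_lt_one hB0).2 hAB
  have h0 : 0 < A / B := div_pos hA0 hB0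
  have hq : Tendsto (fun t : ℝ => (A / B) ^ (t - 1)) atTop (nhds 0) := by
    have h1 := tendsto_rpow_atTop_of_base_lt_one (A / B) (by linarith) h01
    have h2 : Tendsto (fun t : ℝ => t - 1) atTop atTop :=
      tendsto_atTop_add_const_right _ (-1) tendsto_id |>.congr (fun x => by simp [sub_eq_add_neg])
    exact h1.comp h2
  have := hq.mul hkey
  rw [zero_mul] at this
  apply this.congr
  intro t
  have hBt : (0:ℝ) < B ^ (t - 1) := Real.rpow_pos_of_pos hB0 _
  rw [Real.div_rpow hA0.le hB0.le]
  field_simp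

open Real Set in
/-- Corollary 2.1, formula (2.6): for `θ > 0`, `p ∈ ℝ` and `0 < η < η₂ ≤ ∞`,
`(1+η^{2θ})^{t-1} t ∫_η^{η₂} (1+r^{2θ})^{-t} r^p dr → η^{p+1-2θ}/(2θ)` as `t → ∞`. -/
theorem stmt_3 (θ p η : ℝ) (hθ : 0 < θ) (hη : 0 < η) (η₂ : EReal) (hη₂ : (η : EReal) < η₂) :
    Tendsto (fun t : ℝ => (1 + η ^ (2 * θ)) ^ (t - 1) * t *
        ∫ r in {r : ℝ | η < r ∧ (r : EReal) < η₂}, (1 + r ^ (2 * θ)) ^ (-t) * r ^ p)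
      atTop (nhds (η ^ (p + 1 - 2 * θ) / (2 * θ))) := by
  induction η₂ using EReal.rec with
  | bot => exact absurd hη₂ (by simp)
  | top =>
    have hset : {r : ℝ | η < r ∧ (r : EReal) < ⊤} = Ioi η := by
      ext r; simp [EReal.coe_lt_top]
    rw [hset]
    exact stmt3_key θ p η hθ hη
  | coe b =>
    have hb : η < b := by exact_mod_cast hη₂
    have hset : {r : ℝ | η < r ∧ (r : EReal) < (b : ℝ)} = Ioo η b := by
      ext r; simp [Set.mem_Ioo, EReal.coe_lt_coe_iff]
    rw [hset]
    have h1 := stmt3_key θ p η hθ hη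
    have h2 := stmt3_tail θ p η b hθ hη hb
    have h3 := h1.sub h2
    rw [sub_zero] at h3
    apply h3.congr'
    filter_upwards [eventually_gt_atTop ((p + 1) / (2 * θ)), eventually_gt_atTop (0:ℝ)]
      with t ht ht0
    have htint : p + 1 < 2 * θ * t := by
      rw [div_lt_iff₀ (by positivity : (0:ℝ) < 2 * θ)] at ht
      linarith
    have hint := stmt3_integrable θ p η t hθ hη ht0 htint
    have hdisj : Disjoint (Ioo η b) (Ici b) := by
      rw [Set.disjoint_left]
      rintro x ⟨_, h2'⟩ h3'
      exact absurd h3' (not_le.2 h2')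
    have hsplit : ∫ r in Ioi η, (1 + r ^ (2 * θ)) ^ (-t) * r ^ p
        = (∫ r in Ioo η b, (1 + r ^ (2 * θ)) ^ (-t) * r ^ p)
          + ∫ r in Ici b, (1 + r ^ (2 * θ)) ^ (-t) * r ^ p := by
      rw [← setIntegral_union hdisj measurableSet_Ici
        (hint.mono_set Set.Ioo_subset_Ioi_self)
        (hint.mono_set (Set.Ici_subset_Ioi.2 hb))]
      rw [Set.Ioo_union_Ici_eq_Ioi hb]
    rw [hsplit, integral_Ici_eq_integral_Ioi]
    ring
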